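/- Let μ = μ_{R,B} be the self-affine measure for R = [[2,1],[0,2]] and B = {(0,0),(1,0)}. Then every orthogonal set Λ of μ satisfies dim_Be(Λ) ≤ 1. -/

import Mathlib

open MeasureTheory Filter Set Metric
open scoped ENNReal

noncomputable section

/-- The plane with the Euclidean metric. -/
abbrev Plane : Type := EuclideanSpace ℝ (Fin 2)

/-- The point `(a, b)` of the Euclidean plane. -/
def pt (a b : ℝ) : Plane := WithLp.toLp 2 ![a, b]

/-- The self-affine measure `μ_{R,B}` for `R = [[2,1],[0,2]]`, `B = {(0,0),(1,0)}`:
the pushforward of Lebesgue measure on `[0,1]` under `x ↦ (x, 0)`. -/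
def muRB : Measure Plane :=
  Measure.map (fun x : ℝ => pt x 0) (volume.restrict (Set.Icc (0:ℝ) 1))

instance : IsProbabilityMeasure (volume.restrict (Set.Icc (0:ℝ) 1)) :=
  ⟨by simp [Real.volume_Icc]⟩

lemma measurable_pt0 : Measurable (fun x : ℝ => pt x 0) := by
  unfold pt
  refine (PiLp.continuous_toLp 2 _).measurable.comp (measurable_pi_lambda _ (fun i => ?_))
  fin_cases i
  · simp only [Matrix.cons_val_zero]
    exact measurable_id
  · simp only [Matrix.cons_val_one, Matrix.head_cons]
    exact measurable_const

instance : IsProbabilityMeasure muRB :=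
  Measure.isProbabilityMeasure_map measurable_pt0.aemeasurable

/-- The Fourier transform `μ̂(ξ) = ∫ e^{-2πi⟨ξ,x⟩} dμ(x)` of a measure on the plane. -/
def fourierTransform (μ : Measure Plane) (ξ : Plane) : ℂ :=
  ∫ x, Complex.exp ((-(2 * Real.pi * (inner ℝ ξ x : ℝ)) : ℝ) * Complex.I) ∂μ

/-- The exponential function `e_λ(x) = e^{-2πi⟨λ,x⟩}`. -/
def expFn (lam : Plane) : Plane → ℂ :=
  fun x => Complex.exp ((-(2 * Real.pi * (inner ℝ lam x : ℝ)) : ℝ) * Complex.I)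

lemma expFn_memLp (μ : Measure Plane) [IsFiniteMeasure μ] (lam : Plane) :
    MemLp (expFn lam) 2 μ := by
  refine MemLp.of_bound ?_ 1 ?_
  · apply Continuous.aestronglyMeasurable
    unfold expFn
    have h1 : Continuous fun x : Plane => (inner ℝ lam x : ℝ) :=
      continuous_const.inner continuous_id
    exact Complex.continuous_exp.comp
      ((Complex.continuous_ofReal.comp ((continuous_const.mul h1).neg)).mul continuous_const)
  · refine Eventually.of_forall fun x => ?_
    unfold expFn
    rw [Complex.norm_exp_ofReal_mul_I]

/-- The exponential `e_λ` as an element of `L²(μ)`. -/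
def expLp (μ : Measure Plane) [IsFiniteMeasure μ] (lam : Plane) : Lp ℂ 2 μ :=
  (expFn_memLp μ lam).toLp _

/-- `Λ` is an orthogonal set of `μ`: the exponentials `{e_λ : λ ∈ Λ}` form an
orthonormal family in `L²(μ)`. -/
def IsOrthogonalSet (μ : Measure Plane) [IsFiniteMeasure μ] (Λ : Set Plane) : Prop :=
  Orthonormal ℂ (fun lam : Λ => expLp μ lam)

/-- `Λ` is a spectrum of `μ`: the exponentials `{e_λ : λ ∈ Λ}` form an
orthonormal basis of `L²(μ)`. -/
def IsSpectrum (μ : Measure Plane) [IsFiniteMeasure μ] (Λ : Set Plane) : Prop :=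
  Orthonormal ℂ (fun lam : Λ => expLp μ lam) ∧
    (Submodule.span ℂ (Set.range (fun lam : Λ => expLp μ lam))).topologicalClosure = ⊤

/-- The upper `r`-Beurling density
`D_r^+(Λ) = limsup_{h→∞} sup_{x} #(Λ ∩ B(x,h)) / h^r`. -/
def beurlingDensity (r : ℝ) (Λ : Set Plane) : ℝ≥0∞ :=
  limsup (fun h : ℝ =>
    ⨆ x : Plane, ((Λ ∩ Metric.ball x h).encard : ℝ≥0∞) / ENNReal.ofReal (h ^ r)) atTop

/-- The upper `r`-density (centered at the origin)
`B_r^+(Λ) = limsup_{h→∞} #(Λ ∩ B(0,h)) / h^r`. -/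
def upperDensity (r : ℝ) (Λ : Set Plane) : ℝ≥0∞ :=
  limsup (fun h : ℝ =>
    ((Λ ∩ Metric.ball (0 : Plane) h).encard : ℝ≥0∞) / ENNReal.ofReal (h ^ r)) atTop

/-- The Beurling dimension `dim_Be(Λ) = sup {r > 0 : D_r^+(Λ) = ∞}`
(equal to `0` when the set is empty, by the convention `sSup ∅ = 0` in `ℝ`). -/
def beurlingDim (Λ : Set Plane) : ℝ :=
  sSup {r : ℝ | 0 < r ∧ beurlingDensity r Λ = ⊤}

/-- The Banach dimension `dim_Ba(Λ) = sup {r > 0 : B_r^+(Λ) = ∞}`. -/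
def banachDim (Λ : Set Plane) : ℝ :=
  sSup {r : ℝ | 0 < r ∧ upperDensity r Λ = ⊤}

/-- The sign of an integer, as a real number. -/
def isgn (n : ℤ) : ℝ := (Int.sign n : ℝ)

lemma expFn_continuous (lam : Plane) : Continuous (expFn lam) := by
  unfold expFn
  have h1 : Continuous fun x : Plane => (inner ℝ lam x : ℝ) :=
    continuous_const.inner continuous_id
  exact Complex.continuous_exp.comp
    ((Complex.continuous_ofReal.comp ((continuous_const.mul h1).neg)).mul continuous_const)

lemma inner_pt (p : Plane) (t : ℝ) : (inner ℝ p (pt t 0) : ℝ) = p 0 * t := by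
  simp [pt, PiLp.inner_apply, Fin.sum_univ_two, Matrix.cons_val_zero, Matrix.cons_val_one, mul_comm]

lemma sep_of_integral_zero (a : ℝ)
    (hI : ∫ t in (0:ℝ)..1, Complex.exp ((2*Real.pi*a : ℝ) * Complex.I * t) = 0) :
    1 ≤ |a| := by
  by_cases ha : a = 0
  · exfalso; simp [ha] at hI
  · set c : ℂ := (2*Real.pi*a : ℝ) * Complex.I with hc
    have hc0 : c ≠ 0 := by
      simp only [hc, mul_ne_zero_iff, Complex.I_ne_zero, and_true, Complex.ofReal_ne_zero]
      refine ⟨⟨⟨two_ne_zero, Real.pi_ne_zero⟩, ha⟩, Complex.I_ne_zero⟩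
    have key := integral_exp_mul_complex hc0 (a := 0) (b := 1)
    have h2 : ∫ t in (0:ℝ)..1, Complex.exp (c * t) = 0 := by
      simpa [mul_comm] using hI
    rw [h2] at key
    have hexp : Complex.exp c = 1 := by
      have h3 : Complex.exp (c * 1) - Complex.exp (c * 0) = 0 := by
        field_simp at key
        simpa [sub_eq_zero] using key.symm
      simpa [sub_eq_zero] using h3
    obtain ⟨n, hn⟩ := Complex.exp_eq_one_iff.mp hexp
    have han : (a : ℂ) = (n : ℂ) := by
      have h2pi : (2 * (Real.pi:ℂ) * Complex.I) ≠ 0 := by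
        simp [Real.pi_ne_zero, Complex.I_ne_zero]
      field_simp [hc] at hn
      have : (a:ℂ) * (2 * (Real.pi:ℂ) * Complex.I) = (n:ℂ) * (2 * (Real.pi:ℂ) * Complex.I) := by
        rw [hc] at hn; push_cast at hn ⊢; ring_nf at hn ⊢; linear_combination hn
      exact mul_right_cancel₀ h2pi this
    have haR : a = (n : ℝ) := by exact_mod_cast han
    have hn0 : n ≠ 0 := by rintro rfl; simp [haR] at ha
    rw [haR]
    exact_mod_cast Int.one_le_abs (by exact_mod_cast hn0)

set_option maxHeartbeats 1000000 in
lemma first_coord_sep {Λ : Set Plane} (h : IsOrthogonalSet muRB Λ)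
    {p q : Plane} (hp : p ∈ Λ) (hq : q ∈ Λ) (hpq : p ≠ q) : 1 ≤ |p 0 - q 0| := by
  have hne : (⟨p, hp⟩ : Λ) ≠ ⟨q, hq⟩ := fun hh => hpq (congrArg Subtype.val hh)
  have h0 := h.2 hne
  simp only at h0
  rw [MeasureTheory.L2.inner_def] at h0
  have hint : (∫ x, (inner ℂ ((expLp muRB p : Plane → ℂ) x) ((expLp muRB q : Plane → ℂ) x) : ℂ) ∂muRB)
      = ∫ x, (starRingEnd ℂ) (expFn p x) * expFn q x ∂muRB := by
    refine integral_congr_ae ?_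
    filter_upwards [(expFn_memLp muRB p).coeFn_toLp, (expFn_memLp muRB q).coeFn_toLp] with x h1 h2
    rw [RCLike.inner_apply]
    unfold expLp
    rw [h1, h2, mul_comm]
  rw [hint] at h0
  have hmap : ∫ x, (starRingEnd ℂ) (expFn p x) * expFn q x ∂muRB
      = ∫ t in Set.Icc (0:ℝ) 1, (starRingEnd ℂ) (expFn p (pt t 0)) * expFn q (pt t 0) := by
    unfold muRB
    rw [integral_map measurable_pt0.aemeasurable]
    exact (Continuous.aestronglyMeasurable (by
      exact (Complex.continuous_conj.comp (expFn_continuous p)).mul (expFn_continuous q)))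
  rw [hmap] at h0
  have hpw : ∀ t : ℝ, (starRingEnd ℂ) (expFn p (pt t 0)) * expFn q (pt t 0)
      = Complex.exp ((2*Real.pi*(p 0 - q 0) : ℝ) * Complex.I * t) := by
    intro t
    unfold expFn
    rw [← Complex.exp_conj, map_mul, Complex.conj_I, Complex.conj_ofReal, ← Complex.exp_add,
      inner_pt, inner_pt]
    congr 1
    push_cast
    ring
  rw [show (∫ t in Set.Icc (0:ℝ) 1, (starRingEnd ℂ) (expFn p (pt t 0)) * expFn q (pt t 0))
      = ∫ t in Set.Icc (0:ℝ) 1, Complex.exp ((2*Real.pi*(p 0 - q 0) : ℝ) * Complex.I * t) from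
      integral_congr_ae (Eventually.of_forall fun t => hpw t)] at h0
  have hIcc : (∫ t in Set.Icc (0:ℝ) 1, Complex.exp ((2*Real.pi*(p 0 - q 0) : ℝ) * Complex.I * t))
      = ∫ t in (0:ℝ)..1, Complex.exp ((2*Real.pi*(p 0 - q 0) : ℝ) * Complex.I * t) := by
    rw [MeasureTheory.integral_Icc_eq_integral_Ioc, intervalIntegral.integral_of_le zero_le_one]
  rw [hIcc] at h0
  exact sep_of_integral_zero (p 0 - q 0) h0

lemma abs_fst_le_dist (p x : Plane) : |p 0 - x 0| ≤ dist p x := by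
  rw [EuclideanSpace.dist_eq, ← Real.sqrt_sq_eq_abs]
  apply Real.sqrt_le_sqrt
  have : (p 0 - x 0)^2 = dist (p 0) (x 0) ^ 2 := by rw [Real.dist_eq, sq_abs]
  rw [this]
  exact Finset.single_le_sum (fun i _ => sq_nonneg (dist (p i) (x i))) (Finset.mem_univ 0)

lemma count_lemma {S : Set Plane}
    (hsep : ∀ p ∈ S, ∀ q ∈ S, p ≠ q → 1 ≤ |p 0 - q 0|)
    {x : Plane} {hr : ℝ} (hh : 0 ≤ hr) (hS : S ⊆ Metric.ball x hr) :
    (S.encard : ℝ≥0∞) ≤ ENNReal.ofReal (2*hr+2) := by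
  set f : Plane → ℤ := fun p => ⌊p 0⌋ with hf
  have hinj : Set.InjOn f S := by
    intro p hp q hq hfe
    by_contra hne
    have h1 := hsep p hp q hq hne
    have h2 : |p 0 - q 0| < 1 := by
      rw [abs_sub_lt_iff]
      constructor
      · calc p 0 - q 0 < (⌊p 0⌋ + 1) - ⌊q 0⌋ := by
              have := Int.lt_floor_add_one (p 0); have := Int.floor_le (q 0)
              push_cast; linarith
          _ = 1 := by have hfe' : ⌊p 0⌋ = ⌊q 0⌋ := hfe; rw [hfe']; push_cast; ring
      · calc q 0 - p 0 < (⌊q 0⌋ + 1) - ⌊p 0⌋ := by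
              have := Int.lt_floor_add_one (q 0); have := Int.floor_le (p 0)
              push_cast; linarith
          _ = 1 := by have hfe' : ⌊p 0⌋ = ⌊q 0⌋ := hfe; rw [hfe']; push_cast; ring
    linarith
  have hsub : f '' S ⊆ ↑(Finset.Icc ⌊x 0 - hr⌋ ⌊x 0 + hr⌋) := by
    rintro _ ⟨p, hp, rfl⟩
    have hd : dist p x < hr := Metric.mem_ball.mp (hS hp)
    have habs := abs_fst_le_dist p x
    have h3 : x 0 - hr ≤ p 0 := by
      have := abs_sub_lt_iff.mp (lt_of_le_of_lt habs hd)
      linarith [this.2]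
    have h4 : p 0 ≤ x 0 + hr := by
      have := abs_sub_lt_iff.mp (lt_of_le_of_lt habs hd)
      linarith [this.1]
    simp only [Finset.coe_Icc, Set.mem_Icc]
    exact ⟨Int.floor_mono h3, Int.floor_mono h4⟩
  have hcount : S.encard ≤ ((Finset.Icc ⌊x 0 - hr⌋ ⌊x 0 + hr⌋).card : ℕ∞) := by
    calc S.encard = (f '' S).encard := (hinj.encard_image).symm
      _ ≤ (↑(Finset.Icc ⌊x 0 - hr⌋ ⌊x 0 + hr⌋) : Set ℤ).encard := Set.encard_mono hsub
      _ = ((Finset.Icc ⌊x 0 - hr⌋ ⌊x 0 + hr⌋).card : ℕ∞) := Set.encard_coe_eq_coe_finsetCard _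
  calc (S.encard : ℝ≥0∞) ≤ (((Finset.Icc ⌊x 0 - hr⌋ ⌊x 0 + hr⌋).card : ℕ∞) : ℝ≥0∞) :=
        ENat.toENNReal_le.mpr hcount
    _ = ((Finset.Icc ⌊x 0 - hr⌋ ⌊x 0 + hr⌋).card : ℝ≥0∞) := by simp
    _ ≤ ENNReal.ofReal (2*hr+2) := by
        rw [Int.card_Icc]
        set k : ℤ := ⌊x 0 + hr⌋ + 1 - ⌊x 0 - hr⌋ with hk
        have hkR : (k : ℝ) ≤ 2*hr+2 := by
          have h5 := Int.floor_le (x 0 + hr)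
          have h6 := Int.lt_floor_add_one (x 0 - hr)
          push_cast [hk]
          linarith
        rcases le_or_gt k 0 with hk0 | hk0
        · rw [Int.toNat_of_nonpos hk0]; simp
        · have hcast : ((k.toNat : ℕ) : ℝ) = (k : ℝ) := by
            exact_mod_cast Int.toNat_of_nonneg hk0.le
          rw [← ENNReal.ofReal_natCast]
          exact ENNReal.ofReal_le_ofReal (by rw [hcast]; exact hkR)

end

/-- Every orthogonal set of `μ_{R,B}` has Beurling dimension at most `1`. -/
theorem beurlingDim_le_one_of_orthogonal (Λ : Set Plane)
    (h : IsOrthogonalSet muRB Λ) : beurlingDim Λ ≤ 1 := by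
  refine Real.sSup_le (fun r hr => ?_) zero_le_one
  obtain ⟨hr0, hrtop⟩ := hr
  by_contra hr1
  push_neg at hr1
  have hbound : beurlingDensity r Λ ≤ ENNReal.ofReal 3 := by
    refine Filter.limsup_le_of_le (by isBoundedDefault) ?_
    filter_upwards [Filter.eventually_ge_atTop (2:ℝ)] with hh h2
    refine iSup_le fun x => ?_
    have hsep : ∀ p ∈ Λ ∩ Metric.ball x hh, ∀ q ∈ Λ ∩ Metric.ball x hh, p ≠ q →
        1 ≤ |p 0 - q 0| := fun p hp q hq hne => first_coord_sep h hp.1 hq.1 hne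
    have hc := count_lemma hsep (by linarith : (0:ℝ) ≤ hh) Set.inter_subset_right
    calc ((Λ ∩ Metric.ball x hh).encard : ℝ≥0∞) / ENNReal.ofReal (hh ^ r)
        ≤ ENNReal.ofReal (2*hh+2) / ENNReal.ofReal (hh ^ r) := ENNReal.div_le_div_right hc _
      _ ≤ ENNReal.ofReal 3 := by
          apply ENNReal.div_le_of_le_mul
          rw [← ENNReal.ofReal_mul (by norm_num : (0:ℝ) ≤ 3)]
          apply ENNReal.ofReal_le_ofReal
          have hpow : hh ≤ hh ^ r := by
            calc hh = hh ^ (1:ℝ) := (Real.rpow_one hh).symm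
              _ ≤ hh ^ r := Real.rpow_le_rpow_of_exponent_le (by linarith) hr1.le
          linarith
  rw [hrtop] at hbound
  exact (ENNReal.ofReal_ne_top (top_le_iff.mp hbound)).elim
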